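/- Let S be a finite semigroup, H an H-class of S such that (H,·) is a group, α a linear ordering, and σ an additive labelling from α to S with σ(x,y) ∈ H for all x < y. Then there exists a ramseyan split of (α,σ) of height at most |H|. -/
import Mathlib


section Green

variable {S : Type*} [Semigroup S]

/-- Green's preorder `≤_L`: `a = c * b` for some `c ∈ S¹`. -/
def leL (a b : S) : Prop := a = b ∨ ∃ c, a = c * b

/-- Green's preorder `≤_R`: `a = b * c` for some `c ∈ S¹`. -/
def leR (a b : S) : Prop := a = b ∨ ∃ c, a = b * c

/-- Green's preorder `≤_J`: `a = c * b * c'` for some `c, c' ∈ S¹`. -/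
def leJ (a b : S) : Prop :=
  a = b ∨ (∃ c, a = c * b) ∨ (∃ c, a = b * c) ∨ (∃ c c', a = c * b * c')

/-- Green's relation `L`. -/
def eqL (a b : S) : Prop := leL a b ∧ leL b a

/-- Green's relation `R`. -/
def eqR (a b : S) : Prop := leR a b ∧ leR b a

/-- Green's relation `H = L ∩ R`. -/
def eqH (a b : S) : Prop := eqL a b ∧ eqR a b

/-- Green's relation `D = L ∘ R`. -/
def eqD (a b : S) : Prop := ∃ c, eqL a c ∧ eqR c b

/-- Green's relation `J`. -/
def eqJ (a b : S) : Prop := leJ a b ∧ leJ b a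

/-- `H` is an `H`-class of `S`. -/
def IsHClass (H : Set S) : Prop := ∃ a, H = {b | eqH a b}

/-- `L` is an `L`-class of `S`. -/
def IsLClass (L : Set S) : Prop := ∃ a, L = {b | eqL a b}

/-- `D` is a `D`-class of `S`. -/
def IsDClass (D : Set S) : Prop := ∃ a, D = {b | eqD a b}

/-- An `H`-class is a group if it is closed under the product and forms a
group with the induced operation. -/
def IsGroupHClass (H : Set S) : Prop :=
  (∀ a ∈ H, ∀ b ∈ H, a * b ∈ H) ∧
  ∃ e ∈ H, e * e = e ∧
    ∀ a ∈ H, e * a = a ∧ a * e = a ∧ ∃ b ∈ H, a * b = e ∧ b * a = e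

/-- A regular `D`-class: a `D`-class containing an idempotent. -/
def IsRegularDClass (D : Set S) : Prop := IsDClass D ∧ ∃ e ∈ D, e * e = e

end Green

/-- An additive labelling from a linear ordering to a semigroup. -/
def IsAdditive {α S : Type*} [LinearOrder α] [Semigroup S] (σ : α → α → S) : Prop :=
  ∀ x y z : α, x < y → y < z → σ x y * σ y z = σ x z

/-- `x` and `y` are `k`-neighbours for the split `s`. -/
def KNeighbours {α : Type*} [LinearOrder α] (s : α → ℕ) (k : ℕ) (x y : α) : Prop :=
  s x = k ∧ s y = k ∧ ∀ z, min x y ≤ z → z ≤ max x y → k ≤ s z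

/-- A split `s` is ramseyan for the additive labelling `σ`. -/
def IsRamseyanSplit {α S : Type*} [LinearOrder α] [Semigroup S]
    (σ : α → α → S) (s : α → ℕ) : Prop :=
  ∀ k : ℕ, ∀ x y x' y' : α, x < y → x' < y' →
    (∀ a ∈ ({x, y, x', y'} : Set α), ∀ b ∈ ({x, y, x', y'} : Set α), KNeighbours s k a b) →
    σ x y = σ x' y' ∧ σ x y * σ x y = σ x y

theorem split_of_group_Hclass {α S : Type*} [LinearOrder α] [Semigroup S] [Fintype S]
    (H : Set S) (hH : IsHClass H) (hgrp : IsGroupHClass H)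
    (σ : α → α → S) (hσ : IsAdditive σ) (hσH : ∀ x y : α, x < y → σ x y ∈ H) :
    ∃ s : α → ℕ, (∀ x, 1 ≤ s x ∧ s x ≤ H.ncard) ∧ IsRamseyanSplit σ s := by
  classical
  obtain ⟨hcl, e, heH, hee, hid⟩ := hgrp
  have hinv' : ∀ a, a ∈ H → ∃ b, b ∈ H ∧ a * b = e ∧ b * a = e := by
    intro a ha
    obtain ⟨b, hb, h1, h2⟩ := (hid a ha).2.2
    exact ⟨b, hb, h1, h2⟩
  choose! inv hinvH hinvr hinvl using hinv'
  have hel : ∀ a, a ∈ H → e * a = a := fun a ha => (hid a ha).1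
  have her : ∀ a, a ∈ H → a * e = a := fun a ha => (hid a ha).2.1
  -- uniqueness of left inverse
  have huniq : ∀ a ∈ H, ∀ h ∈ H, h * a = e → h = inv a := by
    intro a ha h hh hha
    calc h = h * e := (her h hh).symm
    _ = h * (a * inv a) := by rw [hinvr a ha]
    _ = (h * a) * inv a := (mul_assoc _ _ _).symm
    _ = e * inv a := by rw [hha]
    _ = inv a := hel _ (hinvH a ha)
  rcases isEmpty_or_nonempty α with hα | ⟨⟨z⟩⟩
  · exact ⟨fun _ => 1, fun x => hα.elim x, fun k x y x' y' _ _ _ => hα.elim x⟩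
  · set g : α → S := fun x =>
      if z < x then σ z x else if x < z then inv (σ x z) else e with hgdef
    have gH : ∀ x, g x ∈ H := by
      intro x
      simp only [hgdef]
      split_ifs with h1 h2
      · exact hσH _ _ h1
      · exact hinvH _ (hσH _ _ h2)
      · exact heH
    have gz : g z = e := by simp [hgdef]
    have glt : ∀ x, z < x → g x = σ z x := by intro x h; simp [hgdef, h]
    have ggt : ∀ x, x < z → g x = inv (σ x z) := by
      intro x h; simp [hgdef, h, not_lt_of_gt h]
    have gstep : ∀ x y, x < y → g x * σ x y = g y := by
      intro x y hxy
      rcases lt_trichotomy x z with hx | hx | hx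
      · rcases lt_trichotomy y z with hy | hy | hy
        · -- x < y < z
          rw [ggt x hx, ggt y hy]
          refine huniq _ (hσH _ _ hy) _ (hcl _ (hinvH _ (hσH _ _ hx)) _ (hσH _ _ hxy)) ?_
          rw [mul_assoc, hσ x y z hxy hy, hinvl _ (hσH _ _ hx)]
        · -- y = z
          subst hy
          rw [ggt x hx, gz, hinvl _ (hσH _ _ hx)]
        · -- x < z < y
          rw [ggt x hx, glt y hy, ← hσ x z y hx hy, ← mul_assoc,
            hinvl _ (hσH _ _ hx), hel _ (hσH _ _ hy)]
      · subst hx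
        rw [gz, glt y hxy, hel _ (hσH _ _ hxy)]
      · rw [glt x hx, glt y (hx.trans hxy), hσ z x y hx hxy]
    have key : ∀ x y, x < y → g x = g y → σ x y = e := by
      intro x y hxy hg
      have h1 : inv (g x) * (g x * σ x y) = inv (g x) * g x := by rw [gstep x y hxy, hg]
      rw [← mul_assoc, hinvl _ (gH x)] at h1
      rw [hel _ (hσH _ _ hxy)] at h1
      exact h1
    -- encoding
    have hfin : Fintype ↥H := Fintype.ofFinite ↥H
    let eqv : ↥H ≃ Fin (@Fintype.card ↥H hfin) := @Fintype.equivFin ↥H hfin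
    have hcard : @Fintype.card ↥H hfin = H.ncard := by
      rw [← Nat.card_coe_set_eq, Nat.card_eq_fintype_card]
    refine ⟨fun x => (eqv ⟨g x, gH x⟩).val + 1, ?_, ?_⟩
    · intro x
      refine ⟨Nat.le_add_left 1 _, ?_⟩
      have h2 := (eqv ⟨g x, gH x⟩).isLt
      show (eqv ⟨g x, gH x⟩).val + 1 ≤ H.ncard
      omega
    · intro k x y x' y' hxy hxy' hK
      have hs : ∀ a ∈ ({x, y, x', y'} : Set α), (eqv ⟨g a, gH a⟩).val + 1 = k := by
        intro a ha
        exact (hK a ha a ha).1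
      have hg : ∀ a ∈ ({x, y, x', y'} : Set α), ∀ b ∈ ({x, y, x', y'} : Set α),
          g a = g b := by
        intro a ha b hb
        have h1 := hs a ha
        have h2 := hs b hb
        have : eqv ⟨g a, gH a⟩ = eqv ⟨g b, gH b⟩ := Fin.ext (by omega)
        have := eqv.injective this
        exact congrArg Subtype.val this
      have hx : σ x y = e := key x y hxy (hg x (by simp) y (by simp))
      have hx' : σ x' y' = e := key x' y' hxy' (hg x' (by simp) y' (by simp))
      rw [hx, hx']
      exact ⟨rfl, hee⟩
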